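/- Let (H(s), P(s), τ) be an adiabatic process as in the context, let Λ̃(s) = ∫₀^s λ(s')ds', and define V_A(s) = e^{iτΛ̃(s)}·U_A(s). Then V_A satisfies the intertwining property V_A(s)·P(0) = P(s)·V_A(s) for all s ∈ [0,1], as well as the differential equation ∂_s V_A(s) = [Ṗ(s), P(s)]·V_A(s). -/

import Mathlib

open Set ContinuousLinearMap

/-- The commutatorCLM `[A,B] = AB - BA` of two continuous linear operators. -/
def commutatorCLM {H : Type*} [NormedAddCommGroup H] [InnerProductSpace ℂ H]
    (A B : H →L[ℂ] H) : H →L[ℂ] H :=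
  A.comp B - B.comp A

private lemma clm_comp_deriv {H : Type*} [NormedAddCommGroup H] [InnerProductSpace ℂ H]
    {c d : ℝ → H →L[ℂ] H} {c' d' : H →L[ℂ] H} {s : Set ℝ} {x : ℝ}
    (hc : HasDerivWithinAt c c' s x) (hd : HasDerivWithinAt d d' s x) :
    HasDerivWithinAt (fun y => (c y).comp (d y)) (c'.comp (d x) + (c x).comp d') s x := by
  exact hc.mul hd

private lemma alg_aux {R : Type*} [Ring R] (p c v q : R) :
    (c * p - p * c) * v + p * (c * v) - (c * v) * q = c * (p * v - v * q) := by
  noncomm_ring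

/-- with `Λ̃(s) = ∫₀^s λ` and `V_A(s) = e^{iτΛ̃(s)} U_A(s)`, the family
`V_A` satisfies the intertwining property `V_A(s) P(0) = P(s) V_A(s)` and the
differential equation `∂ₛ V_A(s) = [Ṗ(s), P(s)] V_A(s)` on `[0,1]`. -/
theorem stmt10
    {H : Type*} [NormedAddCommGroup H] [InnerProductSpace ℂ H] [FiniteDimensional ℂ H]
    (τ : ℝ) (hτ : 0 < τ)
    (Ham Ham' Ham'' : ℝ → H →L[ℂ] H)
    (hHamSA : ∀ s ∈ Icc (0:ℝ) 1, IsSelfAdjoint (Ham s))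
    (hHamD : ∀ s ∈ Icc (0:ℝ) 1, HasDerivWithinAt Ham (Ham' s) (Icc 0 1) s)
    (hHamD2 : ∀ s ∈ Icc (0:ℝ) 1, HasDerivWithinAt Ham' (Ham'' s) (Icc 0 1) s)
    (hHamC2 : ContinuousOn Ham'' (Icc 0 1))
    (P P' : ℝ → H →L[ℂ] H)
    (hPD : ∀ s ∈ Icc (0:ℝ) 1, HasDerivWithinAt P (P' s) (Icc 0 1) s)
    (hPC : ContinuousOn P' (Icc 0 1))
    (hPproj : ∀ s ∈ Icc (0:ℝ) 1, (P s).comp (P s) = P s)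
    (hPsa : ∀ s ∈ Icc (0:ℝ) 1, IsSelfAdjoint (P s))
    (hPrank : ∀ s ∈ Icc (0:ℝ) 1, Module.finrank ℂ (LinearMap.range (P s : H →ₗ[ℂ] H)) = 1)
    (lam : ℝ → ℝ) (hlam : ContinuousOn lam (Icc 0 1))
    (heig : ∀ s ∈ Icc (0:ℝ) 1, (Ham s).comp (P s) = (lam s : ℂ) • P s)
    (UA : ℝ → H →L[ℂ] H) (hUA0 : UA 0 = 1)
    (hUAD : ∀ s ∈ Icc (0:ℝ) 1,
      HasDerivWithinAt UA
        ((-Complex.I * (τ : ℂ)) •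
          (((lam s : ℂ) • (1 : H →L[ℂ] H)
            + (Complex.I / (τ : ℂ)) • commutatorCLM (P' s) (P s)).comp (UA s)))
        (Icc 0 1) s) :
    ∀ s ∈ Icc (0:ℝ) 1,
      (Complex.exp (Complex.I * (τ : ℂ) * ((∫ r in (0:ℝ)..s, lam r : ℝ) : ℂ)) • UA s).comp
          (P 0) =
        (P s).comp (Complex.exp (Complex.I * (τ : ℂ) * ((∫ r in (0:ℝ)..s, lam r : ℝ) : ℂ)) • UA s) ∧
      HasDerivWithinAt
        (fun r => Complex.exp (Complex.I * (τ : ℂ) * ((∫ t in (0:ℝ)..r, lam t : ℝ) : ℂ)) • UA r)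
        ((commutatorCLM (P' s) (P s)).comp
          (Complex.exp (Complex.I * (τ : ℂ) * ((∫ r in (0:ℝ)..s, lam r : ℝ) : ℂ)) • UA s))
        (Icc 0 1) s := by
  have hτ' : (τ : ℂ) ≠ 0 := by exact_mod_cast hτ.ne'
  -- clamp map
  set π : ℝ → ℝ := fun t => max 0 (min 1 t) with hπdef
  have hπmem : ∀ t, π t ∈ Icc (0:ℝ) 1 := fun t =>
    ⟨le_max_left _ _, max_le zero_le_one (min_le_left _ _)⟩
  have hπeq : ∀ t ∈ Icc (0:ℝ) 1, π t = t := by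
    intro t ht
    simp only [hπdef, min_eq_right ht.2, max_eq_right ht.1]
  have hπcont : Continuous π := continuous_const.max (continuous_const.min continuous_id)
  -- extended lambda
  set lamE : ℝ → ℝ := fun t => lam (π t) with hlamEdef
  have hlamE : Continuous lamE := hlam.comp_continuous hπcont hπmem
  -- the phase function
  set Λ : ℝ → ℝ := fun r => ∫ t in (0:ℝ)..r, lam t with hΛdef
  have hΛeq : ∀ s ∈ Icc (0:ℝ) 1, Λ s = ∫ t in (0:ℝ)..s, lamE t := by
    intro s hs
    refine intervalIntegral.integral_congr fun r hr => ?_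
    rw [uIcc_of_le hs.1] at hr
    rw [hlamEdef]
    simp only []
    rw [hπeq r ⟨hr.1, hr.2.trans hs.2⟩]
  have hΛD : ∀ s ∈ Icc (0:ℝ) 1, HasDerivWithinAt Λ (lam s) (Icc 0 1) s := by
    intro s hs
    have h1 : HasDerivAt (fun u => ∫ t in (0:ℝ)..u, lamE t) (lamE s) s :=
      intervalIntegral.integral_hasDerivAt_right (hlamE.intervalIntegrable _ _)
        (hlamE.stronglyMeasurableAtFilter _ _) hlamE.continuousAt
    have h2 : HasDerivWithinAt (fun u => ∫ t in (0:ℝ)..u, lamE t) (lamE s) (Icc 0 1) s :=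
      h1.hasDerivWithinAt
    have h3 := h2.congr (fun r hr => hΛeq r hr) (hΛeq s hs)
    have : lamE s = lam s := by rw [hlamEdef]; simp only []; rw [hπeq s hs]
    rwa [this] at h3
  -- V and its derivative
  set V : ℝ → H →L[ℂ] H :=
    fun r => Complex.exp (Complex.I * (τ : ℂ) * ((Λ r : ℝ) : ℂ)) • UA r with hVdef
  set C : ℝ → H →L[ℂ] H := fun s => commutatorCLM (P' s) (P s) with hCdef
  -- rewrite the UA derivative
  have hone : ((-Complex.I * (τ : ℂ)) * (Complex.I / (τ : ℂ))) = 1 := by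
    field_simp
    rw [sq, Complex.I_mul_I]
    ring
  have hUAD' : ∀ s ∈ Icc (0:ℝ) 1,
      HasDerivWithinAt UA
        ((-Complex.I * (τ:ℂ) * (lam s : ℂ)) • UA s + (C s).comp (UA s)) (Icc 0 1) s := by
    intro s hs
    have h := hUAD s hs
    have heq : (-Complex.I * (τ : ℂ)) •
        (((lam s : ℂ) • (1 : H →L[ℂ] H)
          + (Complex.I / (τ : ℂ)) • commutatorCLM (P' s) (P s)).comp (UA s))
        = (-Complex.I * (τ:ℂ) * (lam s : ℂ)) • UA s + (C s).comp (UA s) := by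
      rw [add_comp, smul_comp, smul_comp, one_def, id_comp, smul_add, smul_smul, smul_smul,
        hone, one_smul, hCdef]
    rwa [heq] at h
  have hVD : ∀ s ∈ Icc (0:ℝ) 1,
      HasDerivWithinAt V ((C s).comp (V s)) (Icc 0 1) s := by
    intro s hs
    have hphase : HasDerivWithinAt (fun r => Complex.I * (τ:ℂ) * ((Λ r : ℝ) : ℂ))
        (Complex.I * (τ:ℂ) * (lam s : ℂ)) (Icc 0 1) s := by
      have hre : HasDerivWithinAt (fun r => ((Λ r : ℝ) : ℂ)) ((lam s : ℂ)) (Icc 0 1) s :=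
        Complex.ofRealCLM.hasFDerivAt.comp_hasDerivWithinAt s (hΛD s hs)
      simpa [mul_comm] using hre.const_mul (Complex.I * (τ:ℂ))
    have hexp := hphase.cexp
    have hd := hexp.smul (hUAD' s hs)
    have heq : Complex.exp (Complex.I * (τ:ℂ) * ((Λ s : ℝ) : ℂ)) •
          ((-Complex.I * (τ:ℂ) * (lam s : ℂ)) • UA s + (C s).comp (UA s))
        + (Complex.exp (Complex.I * (τ:ℂ) * ((Λ s : ℝ) : ℂ))
            * (Complex.I * (τ:ℂ) * (lam s : ℂ))) • UA s
        = (C s).comp (V s) := by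
      rw [hVdef]
      simp only [smul_add, smul_smul, ContinuousLinearMap.comp_smul]
      rw [add_comm, ← add_assoc, ← add_smul]
      have hz : Complex.exp (Complex.I * (τ:ℂ) * ((Λ s : ℝ) : ℂ))
            * (Complex.I * (τ:ℂ) * (lam s : ℂ))
          + Complex.exp (Complex.I * (τ:ℂ) * ((Λ s : ℝ) : ℂ))
            * (-Complex.I * (τ:ℂ) * (lam s : ℂ)) = 0 := by ring
      rw [hz, zero_smul, zero_add]
    rwa [heq] at hd
  -- the projector identities
  have hmulproj : ∀ s ∈ Icc (0:ℝ) 1, P s * P s = P s := fun s hs => hPproj s hs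
  have hP'eq : ∀ s ∈ Icc (0:ℝ) 1, P' s * P s + P s * P' s = P' s := by
    intro s hs
    have hu : UniqueDiffWithinAt ℝ (Icc (0:ℝ) 1) s := uniqueDiffOn_Icc one_pos s hs
    have hcc := clm_comp_deriv (hPD s hs) (hPD s hs)
    have h2 : HasDerivWithinAt P ((P' s).comp (P s) + (P s).comp (P' s)) (Icc 0 1) s :=
      hcc.congr (fun r hr => (hPproj r hr).symm) (hPproj s hs).symm
    have := (h2.derivWithin hu).symm.trans ((hPD s hs).derivWithin hu)
    exact this
  have hPPP : ∀ s ∈ Icc (0:ℝ) 1, P s * P' s * P s = 0 := by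
    intro s hs
    have h := congrArg (fun A => P s * A) (hP'eq s hs)
    simp only [mul_add, ← mul_assoc, hmulproj s hs] at h
    exact add_eq_right.mp h
  have hkeyC : ∀ s ∈ Icc (0:ℝ) 1, C s * P s - P s * C s = P' s := by
    intro s hs
    have hC : C s = P' s * P s - P s * P' s := rfl
    rw [hC]
    have e1 : (P' s * P s - P s * P' s) * P s = P' s * P s := by
      rw [sub_mul, mul_assoc, hmulproj s hs, hPPP s hs, sub_zero]
    have e2 : P s * (P' s * P s - P s * P' s) = -(P s * P' s) := by
      rw [mul_sub, ← mul_assoc, ← mul_assoc, hPPP s hs, hmulproj s hs, zero_sub]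
    rw [e1, e2, sub_neg_eq_add]
    exact hP'eq s hs
  -- D and its ODE
  set D : ℝ → H →L[ℂ] H := fun r => (P r).comp (V r) - (V r).comp (P 0) with hDdef
  have hDD : ∀ s ∈ Icc (0:ℝ) 1,
      HasDerivWithinAt D ((C s).comp (D s)) (Icc 0 1) s := by
    intro s hs
    have d1 := clm_comp_deriv (hPD s hs) (hVD s hs)
    have d2 := clm_comp_deriv (hVD s hs) (hasDerivWithinAt_const s (Icc (0:ℝ) 1) (P 0))
    have d := d1.sub d2
    have heq : (P' s).comp (V s) + (P s).comp ((C s).comp (V s))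
        - (((C s).comp (V s)).comp (P 0) + (V s).comp (0 : H →L[ℂ] H)) = (C s).comp (D s) := by
      rw [hDdef]
      simp only [ContinuousLinearMap.comp_zero, mul_zero, add_zero, ← ContinuousLinearMap.mul_def]
      rw [← hkeyC s hs]
      exact alg_aux (P s) (C s) (V s) (P 0)
    rwa [heq] at d
  -- Gronwall / uniqueness
  have hCcont : ContinuousOn C (Icc (0:ℝ) 1) := by
    have hPcont : ContinuousOn P (Icc (0:ℝ) 1) :=
      fun s hs => (hPD s hs).continuousWithinAt
    exact (hPC.clm_comp hPcont).sub (hPcont.clm_comp hPC)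
  obtain ⟨M, hM⟩ := isCompact_Icc.exists_bound_of_continuousOn hCcont
  set K : NNReal := ⟨max M 0, le_max_right _ _⟩ with hKdef
  have hKM : M ≤ (K : ℝ) := le_max_left _ _
  set vfield : ℝ → (H →L[ℂ] H) → (H →L[ℂ] H) :=
    fun t X => (C (π t)).comp X with hvdef
  have hvlip : ∀ t, LipschitzOnWith K (vfield t) univ := by
    intro t
    refine LipschitzWith.lipschitzOnWith ?_
    refine LipschitzWith.of_dist_le_mul ?_
    intro X Y
    rw [dist_eq_norm, dist_eq_norm, ← ContinuousLinearMap.comp_sub]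
    calc ‖(C (π t)).comp (X - Y)‖ ≤ ‖C (π t)‖ * ‖X - Y‖ := opNorm_comp_le _ _
      _ ≤ (K : ℝ) * ‖X - Y‖ := by
          gcongr
          exact (hM _ (hπmem t)).trans hKM
  have hDcont : ContinuousOn D (Icc (0:ℝ) 1) :=
    fun s hs => (hDD s hs).continuousWithinAt
  have hD0 : D 0 = 0 := by
    have hV0 : V 0 = 1 := by
      rw [hVdef]
      simp only [hΛdef, intervalIntegral.integral_same, hUA0, Complex.ofReal_zero, mul_zero,
        Complex.exp_zero, one_smul]
    rw [hDdef]
    simp only [hV0, ContinuousLinearMap.one_def, ContinuousLinearMap.comp_id,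
      ContinuousLinearMap.id_comp, sub_self]
  have hzero : EqOn D (fun _ => (0 : H →L[ℂ] H)) (Icc (0:ℝ) 1) := by
    apply ODE_solution_unique_of_mem_Icc_right (fun t _ => hvlip t) hDcont ?_ (fun t _ => mem_univ _)
      continuousOn_const ?_ (fun t _ => mem_univ _) (by simpa using hD0)
    · intro t ht
      have h1 : HasDerivWithinAt D ((C t).comp (D t)) (Icc 0 1) t :=
        hDD t ⟨ht.1, le_of_lt ht.2⟩
      have hmem : Icc (0:ℝ) 1 ∈ nhdsWithin t (Ici t) := by
        rw [mem_nhdsWithin]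
        exact ⟨Iio 1, isOpen_Iio, ht.2, fun x hx => ⟨ht.1.trans hx.2, le_of_lt hx.1⟩⟩
      have h2 := h1.mono_of_mem_nhdsWithin hmem
      have : vfield t (D t) = (C t).comp (D t) := by
        rw [hvdef]; simp only []; rw [hπeq t ⟨ht.1, le_of_lt ht.2⟩]
      rwa [← this] at h2
    · intro t ht
      have : vfield t ((fun _ => (0 : H →L[ℂ] H)) t) = 0 := by
        simp [hvdef]
      rw [this]
      exact hasDerivWithinAt_const _ _ _
  -- conclude
  intro s hs
  constructor
  · have h := hzero hs
    have h' : (P s).comp (V s) - (V s).comp (P 0) = 0 := h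
    have := sub_eq_zero.mp h'
    exact this.symm
  · exact hVD s hs
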